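/- Let (X, 𝔅, μ) be a σ-finite measure space and let E be an energy form on (X, μ). Let f, g ∈ D(E) with f ≥ 0 μ-a.e., g ≥ 0 μ-a.e. and min(f, g) = 0 μ-a.e. Then E(f, g) ≤ 0, where E(f, g) := (E(f+g) − E(f−g))/4 is the polarized bilinear form computed from the finite real values of E(f+g) and E(f−g). If, in addition, f̃, g̃ ∈ D(E) satisfy 0 ≤ f̃ ≤ f and 0 ≤ g̃ ≤ g μ-a.e., then E(f, g) ≤ E(f̃, g̃). -/

import Mathlib

open Filter MeasureTheory Topology
open scoped ENNReal

/-- Local convergence in `μ`-measure of a net (indexed by `ι`, along the filter `l`)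
of functions `F i : X → ℝ` to `f : X → ℝ`. -/
def TendstoLocInMeasure {X : Type*} [MeasurableSpace X] (μ : Measure X)
    {ι : Type*} (l : Filter ι) (F : ι → X → ℝ) (f : X → ℝ) : Prop :=
  ∀ U : Set X, MeasurableSet U → μ U < ⊤ → ∀ ε : ℝ, 0 < ε →
    Tendsto (fun i => μ (U ∩ {x | ε ≤ |F i x - f x|})) l (𝓝 0)

/-- An energy form on `(X, μ)`: a map `E : (X → ℝ) → [0,∞]` which (1) only depends on
`μ`-equivalence classes, (2) is a quadratic form (parallelogram identity and homogeneity),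
(3) is lower semicontinuous with respect to local convergence in `μ`-measure of nets, and
(4) satisfies `E (C ∘ f) ≤ E f` for every normal contraction `C : ℝ → ℝ`. -/
def IsEnergyForm {X : Type*} [MeasurableSpace X] (μ : Measure X)
    (E : (X → ℝ) → ℝ≥0∞) : Prop :=
  (∀ f g : X → ℝ, f =ᵐ[μ] g → E f = E g) ∧
  (∀ f g : X → ℝ, 2 * E f + 2 * E g = E (f + g) + E (f - g)) ∧
  (∀ (c : ℝ) (f : X → ℝ), E (c • f) = ENNReal.ofReal (c ^ 2) * E f) ∧
  (∀ (ι : Type*) [Preorder ι] [IsDirected ι (· ≤ ·)] [Nonempty ι]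
    (F : ι → X → ℝ) (f : X → ℝ), TendstoLocInMeasure μ atTop F f →
      E f ≤ liminf (fun i => E (F i)) atTop) ∧
  (∀ C : ℝ → ℝ, C 0 = 0 → (∀ x y : ℝ, |C x - C y| ≤ |x - y|) →
    ∀ f : X → ℝ, E (C ∘ f) ≤ E f)

/-- The polarized bilinear form `E(f,g) = (E(f+g) - E(f-g))/4`, computed from the finite
real values of `E (f+g)` and `E (f-g)`. -/
noncomputable def polarForm {X : Type*} (E : (X → ℝ) → ℝ≥0∞) (f g : X → ℝ) : ℝ :=
  ((E (f + g)).toReal - (E (f - g)).toReal) / 4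

/-- for nonnegative functions of disjoint support in the domain of an energy
form, the polarized form is nonpositive, and it is monotone under shrinking the functions. -/
theorem stmt_10 {X : Type*} [MeasurableSpace X] (μ : Measure X) [SigmaFinite μ]
    (E : (X → ℝ) → ℝ≥0∞) (hE : IsEnergyForm μ E)
    (f g : X → ℝ) (hf : E f < ⊤) (hg : E g < ⊤)
    (hf0 : ∀ᵐ x ∂μ, 0 ≤ f x) (hg0 : ∀ᵐ x ∂μ, 0 ≤ g x)
    (hdisj : ∀ᵐ x ∂μ, min (f x) (g x) = 0) :
    polarForm E f g ≤ 0 ∧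
      ∀ f' g' : X → ℝ, E f' < ⊤ → E g' < ⊤ →
        (∀ᵐ x ∂μ, 0 ≤ f' x ∧ f' x ≤ f x) → (∀ᵐ x ∂μ, 0 ≤ g' x ∧ g' x ≤ g x) →
          polarForm E f g ≤ polarForm E f' g' := by
  obtain ⟨hAE, hPar, hHom, hLsc, hContr⟩ := hE
  have habs : ∀ h : X → ℝ, E (fun x => |h x|) ≤ E h := by
    intro h
    have := hContr (fun x => |x|) abs_zero (fun x y => abs_abs_sub_abs_le_abs_sub x y) h
    exact this
  have hE0 : E 0 = 0 := by
    have := hHom 0 0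
    simp only [zero_smul, ne_eq, OfNat.ofNat_ne_zero, not_false_iff, zero_pow,
      ENNReal.ofReal_zero, zero_mul] at this
    exact this
  -- disjointness of supports a.e.
  have hdisj' : ∀ᵐ x ∂μ, f x = 0 ∨ g x = 0 := by
    filter_upwards [hdisj] with x h
    rcases le_total (f x) (g x) with h' | h'
    · left; rwa [min_eq_left h'] at h
    · right; rwa [min_eq_right h'] at h
  -- the key inequality
  have key : ∀ f' g' : X → ℝ, (∀ᵐ x ∂μ, 0 ≤ f' x ∧ f' x ≤ f x) →
      (∀ᵐ x ∂μ, 0 ≤ g' x ∧ g' x ≤ g x) →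
      E (f + g) + E (f' - g') ≤ E (f - g) + E (f' + g') := by
    intro f' g' hf' hg'
    have h1 : (f + g) + (f' - g') =ᵐ[μ] fun x => |((f - g) + (f' + g')) x| := by
      filter_upwards [hdisj', hf', hg'] with x h3 h4 h5
      simp only [Pi.add_apply, Pi.sub_apply]
      rcases h3 with h3 | h3
      · have hf'0 : f' x = 0 := le_antisymm (h3 ▸ h4.2) h4.1
        rw [abs_of_nonpos (by linarith [h5.2])]
        linarith
      · have hg'0 : g' x = 0 := le_antisymm (h3 ▸ h5.2) h5.1
        rw [abs_of_nonneg (by linarith [h4.1])]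
        linarith
    have h2 : (f + g) - (f' - g') =ᵐ[μ] fun x => |((f - g) - (f' + g')) x| := by
      filter_upwards [hdisj', hf', hg'] with x h3 h4 h5
      simp only [Pi.add_apply, Pi.sub_apply]
      rcases h3 with h3 | h3
      · have hf'0 : f' x = 0 := le_antisymm (h3 ▸ h4.2) h4.1
        rw [abs_of_nonpos (by linarith [h5.1])]
        linarith
      · have hg'0 : g' x = 0 := le_antisymm (h3 ▸ h5.2) h5.1
        rw [abs_of_nonneg (by linarith [h4.2])]
        linarith
    have step : 2 * (E (f + g) + E (f' - g')) ≤ 2 * (E (f - g) + E (f' + g')) := by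
      calc 2 * (E (f + g) + E (f' - g'))
          = 2 * E (f + g) + 2 * E (f' - g') := by ring
        _ = E ((f + g) + (f' - g')) + E ((f + g) - (f' - g')) := hPar _ _
        _ = E (fun x => |((f - g) + (f' + g')) x|)
            + E (fun x => |((f - g) - (f' + g')) x|) := by
            rw [hAE _ _ h1, hAE _ _ h2]
        _ ≤ E ((f - g) + (f' + g')) + E ((f - g) - (f' + g')) :=
            add_le_add (habs _) (habs _)
        _ = 2 * E (f - g) + 2 * E (f' + g') := (hPar _ _).symm
        _ = 2 * (E (f - g) + E (f' + g')) := by ring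
    exact (ENNReal.mul_le_mul_iff_right (by norm_num) (by norm_num)).mp step
  -- finiteness
  have hfin : ∀ u v : X → ℝ, E u < ⊤ → E v < ⊤ → E (u + v) < ⊤ ∧ E (u - v) < ⊤ := by
    intro u v hu hv
    have hsum : E (u + v) + E (u - v) < ⊤ := by
      rw [← hPar u v]
      exact ENNReal.add_lt_top.mpr ⟨ENNReal.mul_lt_top (by norm_num) hu,
        ENNReal.mul_lt_top (by norm_num) hv⟩
    exact ⟨lt_of_le_of_lt (le_add_right le_rfl) hsum,
      lt_of_le_of_lt (le_add_left le_rfl) hsum⟩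
  obtain ⟨hfg1, hfg2⟩ := hfin f g hf hg
  constructor
  · -- take f' = g' = 0
    have h0 : E (f + g) + E ((0 : X → ℝ) - 0) ≤ E (f - g) + E ((0 : X → ℝ) + 0) :=
      key 0 0 (by filter_upwards [hf0] with x h; exact ⟨le_rfl, h⟩)
        (by filter_upwards [hg0] with x h; exact ⟨le_rfl, h⟩)
    have h0' : E (f + g) ≤ E (f - g) := by
      simpa [hE0] using h0
    have := ENNReal.toReal_mono hfg2.ne h0'
    rw [polarForm]
    linarith
  · intro f' g' hf'fin hg'fin hf' hg'
    obtain ⟨hfg1', hfg2'⟩ := hfin f' g' hf'fin hg'fin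
    have h0 := key f' g' hf' hg'
    have h0' : (E (f + g)).toReal + (E (f' - g')).toReal
        ≤ (E (f - g)).toReal + (E (f' + g')).toReal := by
      rw [← ENNReal.toReal_add hfg1.ne hfg2'.ne, ← ENNReal.toReal_add hfg2.ne hfg1'.ne]
      exact ENNReal.toReal_mono (ENNReal.add_lt_top.mpr ⟨hfg2, hfg1'⟩).ne h0
    rw [polarForm, polarForm]
    linarith
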